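/- Uniform bounds for inflated correlation path weights. Let K = Σ⁻¹ be adapted to G = (V,E) and let Φ^V be the inflated correlation matrix of X_V. Then for every path π between any two distinct vertices x and y in G it holds that −det(Φ^V) ≤ ω(π, Φ^V) ≤ det(Φ^V), and ω(π, Φ^V)/det(Φ^V) = φ(π,R), where φ(π,R) = det((I−R)_{P̄P̄}) · ∏_{{u,v}∈E(π)} ρ_{uv·V∖{u,v}} with P = V(π). -/

import Mathlib

open Matrix BigOperators Finset

variable {V : Type*} [Fintype V] [DecidableEq V]

/-- Submatrix of `M` with rows indexed by `A` and columns indexed by `B`. -/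
noncomputable def subm (M : Matrix V V ℝ) (A B : Finset V) : Matrix ↥A ↥B ℝ :=
  Matrix.of fun i j => M i.1 j.1

/-- Partial covariance matrix `Σ_{AA·B}` of `A` given a disjoint set `B`. -/
noncomputable def pcovOn (M : Matrix V V ℝ) (A B : Finset V) : Matrix ↥A ↥A ℝ :=
  subm M A A - subm M A B * (subm M B B)⁻¹ * subm M B A

/-- Partial covariance matrix `Σ_{AA·Ā}` given the complement of `A`. -/
noncomputable def pcov (M : Matrix V V ℝ) (A : Finset V) : Matrix ↥A ↥A ℝ :=
  pcovOn M A Aᶜ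

/-- Inflation factor of `A` on `B`. -/
noncomputable def inflF (M : Matrix V V ℝ) (A B : Finset V) : ℝ :=
  ((subm M A A).det * (subm M B B).det) / (subm M (A ∪ B) (A ∪ B)).det

/-- The path weight `ω(π, Γ)` of a walk `p`, computed from `Θ = Γ⁻¹`. -/
noncomputable def pathWeight (Γ : Matrix V V ℝ) {G : SimpleGraph V} {x y : V}
    (p : G.Walk x y) : ℝ :=
  (-1 : ℝ) ^ (p.support.toFinset.card + 1) *
    ((subm Γ⁻¹ p.support.toFinsetᶜ p.support.toFinsetᶜ).det / Γ⁻¹.det) *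
    (p.darts.map fun d => Γ⁻¹ d.toProd.1 d.toProd.2).prod

/-- The partial covariance weight `ω(π, Σ_{AA·Ā})` of a walk `p` with vertices in `A`,
expressed via `K = Σ⁻¹`: `(−1)^{|P|+1} (det K_{A∖P,A∖P}/det K_AA) ∏ κ_uv`. -/
noncomputable def partialPathWeight (S : Matrix V V ℝ) (A : Finset V) {G : SimpleGraph V}
    {x y : V} (p : G.Walk x y) : ℝ :=
  (-1 : ℝ) ^ (p.support.toFinset.card + 1) *
    ((subm S⁻¹ (A \ p.support.toFinset) (A \ p.support.toFinset)).det /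
      (subm S⁻¹ A A).det) *
    (p.darts.map fun d => S⁻¹ d.toProd.1 d.toProd.2).prod

/-- `K` is adapted to `G` when nonzero off-diagonal entries correspond to edges. -/
def Adapted (K : Matrix V V ℝ) (G : SimpleGraph V) : Prop :=
  ∀ u v : V, u ≠ v → K u v ≠ 0 → G.Adj u v

/-- Correlation-type scaling of a positive definite matrix. -/
noncomputable def corrScale {ι : Type*} (M : Matrix ι ι ℝ) : Matrix ι ι ℝ :=
  Matrix.of fun i j => M i j / (Real.sqrt (M i i) * Real.sqrt (M j j))

/-- The inflated correlation matrix `Φ^V = diag(K)^{1/2} Σ diag(K)^{1/2}`. -/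
noncomputable def inflCorr (S : Matrix V V ℝ) : Matrix V V ℝ :=
  Matrix.of fun u v => Real.sqrt (S⁻¹ u u) * S u v * Real.sqrt (S⁻¹ v v)

/-- The weight `ω(π, M)` of a walk `p` whose vertices lie in `P`, computed in the
induced subgraph from a matrix `M` indexed by `P`; here `V(π) = P`, so the determinant
factor (over the empty set) is `1`. -/
noncomputable def subPathWeight {P : Finset V} (M : Matrix ↥P ↥P ℝ) {G : SimpleGraph V}
    {x y : V} (p : G.Walk x y) (hp : ∀ v ∈ p.support, v ∈ P) : ℝ :=
  (-1 : ℝ) ^ (p.support.toFinset.card + 1) * (1 / M⁻¹.det) *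
    (p.darts.attach.map fun d =>
      M⁻¹ ⟨d.1.toProd.1, hp _ (SimpleGraph.Walk.dart_fst_mem_support_of_mem_darts p d.2)⟩
          ⟨d.1.toProd.2, hp _ (SimpleGraph.Walk.dart_snd_mem_support_of_mem_darts p d.2)⟩).prod

/-- Product of partial correlations `ρ_{uv·V∖{u,v}} = −κ_uv/(√κ_uu √κ_vv)`
over the edges of a walk. -/
noncomputable def prodPartialCorr (S : Matrix V V ℝ) {G : SimpleGraph V} {x y : V}
    (p : G.Walk x y) : ℝ :=
  (p.darts.map fun d => -(corrScale S⁻¹ d.toProd.1 d.toProd.2)).prod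

/-- A walk is chordless if every edge of `G` joining two of its vertices is an edge of
the walk. -/
def Chordless {G : SimpleGraph V} {x y : V} (p : G.Walk x y) : Prop :=
  ∀ u v : V, u ∈ p.support → v ∈ p.support → G.Adj u v → s(u, v) ∈ p.edges

/-- The quantity `φ(π, R) = det((I−R)_{P̄P̄}) ∏ ρ_{uv·V∖{u,v}}`. -/
noncomputable def phiWeight (S : Matrix V V ℝ) {G : SimpleGraph V} {x y : V}
    (p : G.Walk x y) : ℝ :=
  (subm (corrScale S⁻¹) p.support.toFinsetᶜ p.support.toFinsetᶜ).det * prodPartialCorr S p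

section AuxLemmas

lemma my_posDef_submatrix {m n : Type*} [Fintype m] [Fintype n] [DecidableEq n] [DecidableEq m]
    {M : Matrix n n ℝ} (hM : M.PosDef) (e : m → n) (he : Function.Injective e) :
    (M.submatrix e e).PosDef := by
  refine PosDef.of_dotProduct_mulVec_pos (hM.1.submatrix e) fun x hx => ?_
  set y : n → ℝ := fun v => ∑ i, if e i = v then x i else 0 with hy
  have key : ∀ f : n → ℝ, ∑ w, f w * y w = ∑ j, f (e j) * x j := by
    intro f
    simp only [hy, Finset.mul_sum]
    rw [Finset.sum_comm]
    refine Finset.sum_congr rfl fun j _ => ?_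
    simp [mul_ite]
  have hyy : ∀ i, y (e i) = x i := by
    intro i
    simp [hy, he.eq_iff]
  have hyne : y ≠ 0 := by
    intro h
    apply hx
    funext i
    have := congrFun h (e i)
    rw [hyy i] at this
    exact this
  have hpos := hM.dotProduct_mulVec_pos hyne
  have hcalc : star y ⬝ᵥ M *ᵥ y = star x ⬝ᵥ (M.submatrix e e) *ᵥ x := by
    simp only [star_trivial, dotProduct, mulVec, submatrix_apply]
    calc ∑ v, y v * ∑ w, M v w * y w
        = ∑ v, (∑ w, M v w * y w) * y v := by simp [mul_comm]
      _ = ∑ j, (∑ w, M (e j) w * y w) * x j := key _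
      _ = ∑ j, (∑ i, M (e j) (e i) * x i) * x j := by
          refine Finset.sum_congr rfl fun j _ => ?_
          rw [key fun w => M (e j) w]
      _ = ∑ j, x j * ∑ i, M (e j) (e i) * x i := by simp [mul_comm]
  rw [← hcalc]
  exact hpos

lemma my_sum_eigenvalues_eq_trace {n : Type*} [Fintype n] [DecidableEq n]
    {A : Matrix n n ℝ} (hA : A.IsHermitian) : ∑ i, hA.eigenvalues i = A.trace := by
  have h := hA.spectral_theorem
  have h2 : A.trace = (diagonal (RCLike.ofReal ∘ hA.eigenvalues) : Matrix n n ℝ).trace := by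
    conv_lhs => rw [h, Unitary.conjStarAlgAut_apply]
    rw [trace_mul_cycle]
    rw [show (star (hA.eigenvectorUnitary : Matrix n n ℝ)) * (hA.eigenvectorUnitary : Matrix n n ℝ) = 1 from Unitary.coe_star_mul_self _]
    rw [one_mul]
  rw [h2, trace_diagonal]
  simp

lemma my_det_le_one_of_unit_diag {ι : Type*} [Fintype ι] [DecidableEq ι]
    {N : Matrix ι ι ℝ} (hN : N.PosDef) (hdiag : ∀ i, N i i = 1) : N.det ≤ 1 := by
  rcases isEmpty_or_nonempty ι with h | h
  · simp [Matrix.det_isEmpty]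
  have hlp : ∀ i, 0 < hN.1.eigenvalues i := hN.eigenvalues_pos
  have hdet : N.det = ∏ i, hN.1.eigenvalues i := by
    rw [hN.1.det_eq_prod_eigenvalues]; norm_num
  have htr : ∑ i, hN.1.eigenvalues i = (Fintype.card ι : ℝ) := by
    rw [my_sum_eigenvalues_eq_trace hN.1, Matrix.trace]
    simp [Matrix.diag, hdiag]
  have hn : (0:ℝ) < Fintype.card ι := by positivity
  have hgm := Real.geom_mean_le_arith_mean (Finset.univ : Finset ι) (fun _ => 1)
      hN.1.eigenvalues (fun _ _ => zero_le_one) (by simpa using hn)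
      (fun i _ => (hlp i).le)
  simp only [Real.rpow_one, one_mul, Finset.sum_const, Finset.card_univ, nsmul_eq_mul,
    mul_one] at hgm
  rw [htr] at hgm
  rw [div_self hn.ne'] at hgm
  have hppos : 0 < ∏ i, hN.1.eigenvalues i := Finset.prod_pos fun i _ => hlp i
  have h2 : ((∏ i, hN.1.eigenvalues i) ^ ((Fintype.card ι : ℝ))⁻¹) ^ (Fintype.card ι : ℕ) ≤ 1 := by
    calc _ ≤ (1:ℝ) ^ (Fintype.card ι : ℕ) :=
          pow_le_pow_left₀ (Real.rpow_nonneg hppos.le _) hgm _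
      _ = 1 := one_pow _
  rw [← Real.rpow_natCast ((∏ i, hN.1.eigenvalues i) ^ ((Fintype.card ι : ℝ))⁻¹) _,
    ← Real.rpow_mul hppos.le, inv_mul_cancel₀ (by exact_mod_cast hn.ne'), Real.rpow_one] at h2
  rw [hdet]; exact h2

lemma my_diag_herm {V : Type*} [DecidableEq V] (d : V → ℝ) :
    (diagonal d : Matrix V V ℝ)ᴴ = diagonal d := by
  rw [diagonal_conjTranspose]
  congr

lemma my_diag_conj_posDef {V : Type*} [Fintype V] [DecidableEq V]
    {M : Matrix V V ℝ} (hM : M.PosDef) (d : V → ℝ)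
    (hd : ∀ v, d v ≠ 0) : (diagonal d * M * diagonal d).PosDef := by
  have herm : (diagonal d * M * diagonal d).IsHermitian := by
    have h := Matrix.isHermitian_conjTranspose_mul_mul (diagonal d) hM.1
    rwa [my_diag_herm] at h
  refine PosDef.of_dotProduct_mulVec_pos herm fun x hx => ?_
  set y : V → ℝ := fun v => d v * x v with hy
  have hyne : y ≠ 0 := by
    intro h
    apply hx
    funext v
    have := congrFun h v
    simp only [hy, Pi.zero_apply] at this ⊢
    exact (mul_eq_zero.mp this).resolve_left (hd v)
  have hDx : (diagonal d) *ᵥ x = y := funext fun v => mulVec_diagonal d x v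
  have hcalc : star x ⬝ᵥ ((diagonal d * M * diagonal d) *ᵥ x) = star y ⬝ᵥ M *ᵥ y := by
    rw [← mulVec_mulVec, ← mulVec_mulVec, hDx]
    simp only [star_trivial, dotProduct, mulVec_diagonal]
    exact Finset.sum_congr rfl fun v _ => by rw [hy]; ring
  rw [hcalc]
  exact hM.dotProduct_mulVec_pos hyne

lemma my_inflCorr_eq {V : Type*} [Fintype V] [DecidableEq V] (S : Matrix V V ℝ) :
    inflCorr S = diagonal (fun v => Real.sqrt (S⁻¹ v v)) * S *
      diagonal (fun v => Real.sqrt (S⁻¹ v v)) := by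
  ext u v
  simp only [inflCorr, Matrix.of_apply, Matrix.mul_diagonal, Matrix.diagonal_mul]

lemma my_corrScale_eq {V : Type*} [Fintype V] [DecidableEq V] (K : Matrix V V ℝ) :
    corrScale K = diagonal (fun v => (Real.sqrt (K v v))⁻¹) * K *
      diagonal (fun v => (Real.sqrt (K v v))⁻¹) := by
  ext u v
  simp only [corrScale, Matrix.of_apply, Matrix.mul_diagonal, Matrix.diagonal_mul,
    div_eq_mul_inv, mul_inv]
  ring

lemma my_neg_map_prod {α : Type*} (l : List α) (f : α → ℝ) :
    (l.map fun a => -f a).prod = (-1 : ℝ) ^ l.length * (l.map f).prod := by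
  induction l with
  | nil => simp
  | cons a l ih => simp [ih, pow_succ]; ring

lemma my_abs_list_prod_le_one (l : List ℝ) (h : ∀ a ∈ l, |a| ≤ 1) : |l.prod| ≤ 1 := by
  induction l with
  | nil => simp
  | cons a l ih =>
    rw [List.prod_cons, abs_mul]
    have h1 : |a| ≤ 1 := h a List.mem_cons_self
    have h2 : |l.prod| ≤ 1 := ih fun b hb => h b (List.mem_cons_of_mem a hb)
    calc |a| * |l.prod| ≤ 1 * 1 :=
          mul_le_mul h1 h2 (abs_nonneg _) zero_le_one
      _ = 1 := mul_one 1

end AuxLemmas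

/-- uniform bounds for inflated correlation path weights:
`−det(Φ^V) ≤ ω(π, Φ^V) ≤ det(Φ^V)` and `ω(π, Φ^V)/det(Φ^V) = φ(π,R)`. -/
theorem inflated_correlation_weight_bounds {V : Type*} [Fintype V] [DecidableEq V]
    (S : Matrix V V ℝ) (hS : S.PosDef) (G : SimpleGraph V) [DecidableRel G.Adj]
    (hadapt : Adapted S⁻¹ G) {x y : V} (hxy : x ≠ y) (p : G.Walk x y) (hp : p.IsPath) :
    -(inflCorr S).det ≤ pathWeight (inflCorr S) p ∧
    pathWeight (inflCorr S) p ≤ (inflCorr S).det ∧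
    pathWeight (inflCorr S) p / (inflCorr S).det = phiWeight S p := by
    classical
  have hK : (S⁻¹).PosDef := hS.inv
  have hKd : ∀ v, 0 < S⁻¹ v v := by
    intro v
    have h := hK.dotProduct_mulVec_pos (x := Pi.single v 1) (by simp [Function.ne_iff])
    simpa [dotProduct, mulVec, Pi.single_apply, Finset.sum_ite_eq, Finset.sum_ite_eq',
      mul_ite, ite_mul] using h
  set d : V → ℝ := fun v => Real.sqrt (S⁻¹ v v) with hdd
  have hdpos : ∀ v, 0 < d v := fun v => Real.sqrt_pos.mpr (hKd v)
  set Θ : Matrix V V ℝ := corrScale S⁻¹ with hΘdef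
  have hΘeq : Θ = diagonal (fun v => (d v)⁻¹) * S⁻¹ * diagonal (fun v => (d v)⁻¹) :=
    my_corrScale_eq S⁻¹
  have hΘpd : Θ.PosDef := by
    rw [hΘeq]
    exact my_diag_conj_posDef hK _ fun v => inv_ne_zero (hdpos v).ne'
  have hΘdiag : ∀ v, Θ v v = 1 := by
    intro v
    simp only [hΘdef, corrScale, Matrix.of_apply]
    rw [Real.mul_self_sqrt (hKd v).le]
    exact div_self (hKd v).ne'
  have hΘsymm : ∀ u v, Θ v u = Θ u v := by
    intro u v
    have := congrFun (congrFun hΘpd.1 u) v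
    simpa [conjTranspose_apply] using this
  have hdiagmul : diagonal d * diagonal (fun v => (d v)⁻¹) = (1 : Matrix V V ℝ) := by
    rw [diagonal_mul_diagonal]
    rw [show (fun v => d v * (d v)⁻¹) = fun _ : V => (1:ℝ) from
      funext fun v => mul_inv_cancel₀ (hdpos v).ne']
    exact diagonal_one
  have hSK : S * S⁻¹ = 1 := mul_nonsing_inv S hS.det_pos.ne'.isUnit
  have hmul : inflCorr S * Θ = 1 := by
    rw [my_inflCorr_eq, hΘeq]
    simp only [← hdd]
    calc diagonal d * S * diagonal d *
          (diagonal (fun v => (d v)⁻¹) * S⁻¹ * diagonal (fun v => (d v)⁻¹))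
        = diagonal d * (S * ((diagonal d * diagonal (fun v => (d v)⁻¹)) *
            (S⁻¹ * diagonal (fun v => (d v)⁻¹)))) := by
          simp only [mul_assoc]
      _ = diagonal d * (S * (S⁻¹ * diagonal (fun v => (d v)⁻¹))) := by
          rw [hdiagmul, one_mul]
      _ = diagonal d * diagonal (fun v => (d v)⁻¹) := by
          rw [← mul_assoc S S⁻¹, hSK, one_mul]
      _ = 1 := hdiagmul
  have hΦinv : (inflCorr S)⁻¹ = Θ := inv_eq_right_inv hmul
  have hΘdet : 0 < Θ.det := hΘpd.det_pos
  have hΦdet' : (inflCorr S).det = (Θ.det)⁻¹ := by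
    have h := congrArg Matrix.det hmul
    rw [det_mul, det_one] at h
    field_simp at h ⊢
    linarith [h]
  have hΦdet : 0 < (inflCorr S).det := by rw [hΦdet']; positivity
  have hsupp_card : p.support.toFinset.card = p.length + 1 := by
    rw [List.toFinset_card_of_nodup hp.support_nodup, SimpleGraph.Walk.length_support]
  -- the determinant factor
  have hsubpd : (subm Θ p.support.toFinsetᶜ p.support.toFinsetᶜ).PosDef := by
    have : subm Θ p.support.toFinsetᶜ p.support.toFinsetᶜ =
        Θ.submatrix (fun i : ↥(p.support.toFinsetᶜ) => (i : V))
          (fun i : ↥(p.support.toFinsetᶜ) => (i : V)) := rfl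
    rw [this]
    exact my_posDef_submatrix hΘpd _ Subtype.coe_injective
  have hsub_le : (subm Θ p.support.toFinsetᶜ p.support.toFinsetᶜ).det ≤ 1 :=
    my_det_le_one_of_unit_diag hsubpd fun i => hΘdiag i
  have hsub_pos : 0 < (subm Θ p.support.toFinsetᶜ p.support.toFinsetᶜ).det :=
    hsubpd.det_pos
  -- off-diagonal bound
  have hoff : ∀ u v : V, u ≠ v → |Θ u v| ≤ 1 := by
    intro u v huv
    have hinj : Function.Injective (![u, v] : Fin 2 → V) := by
      intro i j hij
      fin_cases i <;> fin_cases j <;> simp_all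
    have hpd2 := my_posDef_submatrix hΘpd ![u, v] hinj
    have hdet2 := hpd2.det_pos
    rw [Matrix.det_fin_two] at hdet2
    simp only [Matrix.submatrix_apply, Matrix.cons_val_zero, Matrix.cons_val_one,
      Matrix.head_cons] at hdet2
    rw [hΘdiag u, hΘdiag v, hΘsymm u v] at hdet2
    rw [abs_le_one_iff_mul_self_le_one]
    nlinarith
  have hprodle : |(p.darts.map fun dd => -(Θ dd.toProd.1 dd.toProd.2)).prod| ≤ 1 := by
    apply my_abs_list_prod_le_one
    intro a ha
    rw [List.mem_map] at ha
    obtain ⟨dd, hdd2, rfl⟩ := ha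
    rw [abs_neg]
    exact hoff _ _ (G.ne_of_adj dd.adj)
  have habs : |phiWeight S p| ≤ 1 := by
    unfold phiWeight prodPartialCorr
    rw [abs_mul, ← hΘdef]
    calc |(subm Θ p.support.toFinsetᶜ p.support.toFinsetᶜ).det| *
          |(p.darts.map fun dd => -(Θ dd.toProd.1 dd.toProd.2)).prod| ≤ 1 * 1 := by
          apply mul_le_mul _ hprodle (abs_nonneg _) zero_le_one
          rw [abs_of_pos hsub_pos]
          exact hsub_le
      _ = 1 := mul_one 1
  -- the key identity
  have hpw : pathWeight (inflCorr S) p = phiWeight S p * (inflCorr S).det := by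
    unfold pathWeight phiWeight prodPartialCorr
    rw [hΦinv, ← hΘdef, hΦdet', hsupp_card, my_neg_map_prod, SimpleGraph.Walk.length_darts]
    have hpow : (-1 : ℝ) ^ (p.length + 1 + 1) = (-1 : ℝ) ^ p.length := by
      rw [pow_succ, pow_succ]
      ring
    rw [hpow]
    field_simp
  have hdiv : pathWeight (inflCorr S) p / (inflCorr S).det = phiWeight S p := by
    rw [hpw, mul_div_assoc, div_self hΦdet.ne', mul_one]
  refine ⟨?_, ?_, hdiv⟩
  · have h1 : |pathWeight (inflCorr S) p| ≤ (inflCorr S).det := by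
      rw [hpw, abs_mul, abs_of_pos hΦdet]
      calc |phiWeight S p| * (inflCorr S).det ≤ 1 * (inflCorr S).det :=
            mul_le_mul_of_nonneg_right habs hΦdet.le
        _ = (inflCorr S).det := one_mul _
    linarith [(abs_le.mp h1).1]
  · have h1 : |pathWeight (inflCorr S) p| ≤ (inflCorr S).det := by
      rw [hpw, abs_mul, abs_of_pos hΦdet]
      calc |phiWeight S p| * (inflCorr S).det ≤ 1 * (inflCorr S).det :=
            mul_le_mul_of_nonneg_right habs hΦdet.le
        _ = (inflCorr S).det := one_mul _
    exact (abs_le.mp h1).2
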